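/- Let B ≥ 0 and let (a_j), (b_j), (c_j), (γ_j), (d_j) be nonnegative sequences such that for all n ≥ 0, a_n + Σ_{j=0}^n b_j ≤ γ_n a_n + Σ_{j=0}^{n-1} (γ_j + d_j) a_j + Σ_{j=0}^n c_j + B. Suppose γ_j < 1 for all j and set σ_j = (1 - γ_j)^{-1}. Then for every n ≥ 0, a_n + Σ_{j=0}^n b_j ≤ exp(σ_n γ_n + Σ_{j=0}^{n-1} (σ_j γ_j + d_j)) · (Σ_{j=0}^n c_j + B). -/

import Mathlib

open Finset

namespace Paper

/-- Discrete Gronwall inequality: if `a n + ∑_{j=0}^n b j ≤ γ n * a n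
+ ∑_{j=0}^{n-1} (γ j + d j) * a j + ∑_{j=0}^n c j + B` for all `n`, all
quantities are nonnegative, and `γ j < 1` with `σ j = (1 - γ j)⁻¹`, then
`a n + ∑_{j=0}^n b j ≤ exp (σ n * γ n + ∑_{j=0}^{n-1} (σ j * γ j + d j)) * (∑_{j=0}^n c j + B)`. -/
theorem discrete_gronwall
    (B : ℝ) (hB : 0 ≤ B)
    (a b c γ d σ : ℕ → ℝ)
    (ha : ∀ j, 0 ≤ a j) (hb : ∀ j, 0 ≤ b j) (hc : ∀ j, 0 ≤ c j)
    (hγ0 : ∀ j, 0 ≤ γ j) (hd : ∀ j, 0 ≤ d j)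
    (hγ1 : ∀ j, γ j < 1)
    (hσ : ∀ j, σ j = (1 - γ j)⁻¹)
    (hyp : ∀ n, a n + ∑ j ∈ range (n + 1), b j
      ≤ γ n * a n + ∑ j ∈ range n, (γ j + d j) * a j + ∑ j ∈ range (n + 1), c j + B) :
    ∀ n, a n + ∑ j ∈ range (n + 1), b j
      ≤ Real.exp (σ n * γ n + ∑ j ∈ range n, (σ j * γ j + d j))
        * (∑ j ∈ range (n + 1), c j + B) := by
  set E : ℕ → ℝ := fun n => ∑ j ∈ range (n + 1), c j + B with hE
  set F : ℕ → ℝ := fun n => ∑ j ∈ range n, (γ j + d j) * a j + E n with hF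
  have hγpos : ∀ j, (0:ℝ) < 1 - γ j := fun j => by linarith [hγ1 j]
  have hσpos : ∀ j, 0 < σ j := fun j => by rw [hσ j]; exact inv_pos.mpr (hγpos j)
  have hσeq : ∀ j, σ j * (1 - γ j) = 1 := fun j => by
    rw [hσ j]; exact inv_mul_cancel₀ (hγpos j).ne'
  have hσ1 : ∀ j, σ j = 1 + σ j * γ j := fun j => by
    have h := hσeq j; nlinarith
  have hEnn : ∀ n, 0 ≤ E n := fun n => by
    have : 0 ≤ ∑ j ∈ range (n + 1), c j := Finset.sum_nonneg fun j _ => hc j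
    simp only [hE]; linarith
  have hFnn : ∀ n, 0 ≤ F n := fun n => by
    have h1 : 0 ≤ ∑ j ∈ range n, (γ j + d j) * a j :=
      Finset.sum_nonneg fun j _ => mul_nonneg (by linarith [hγ0 j, hd j]) (ha j)
    simp only [hF]; linarith [hEnn n]
  have key : ∀ n, (1 - γ n) * a n ≤ F n := by
    intro n
    have h1 := hyp n
    have h2 : 0 ≤ ∑ j ∈ range (n + 1), b j := Finset.sum_nonneg fun j _ => hb j
    simp only [hF, hE]
    nlinarith
  have haF : ∀ n, a n ≤ σ n * F n := by
    intro n
    have : a n = σ n * ((1 - γ n) * a n) := by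
      rw [← mul_assoc, hσeq n, one_mul]
    rw [this]
    exact mul_le_mul_of_nonneg_left (key n) (hσpos n).le
  have hFexp : ∀ n, F n ≤ Real.exp (∑ j ∈ range n, (σ j * γ j + d j)) * E n := by
    intro n
    induction n with
    | zero => simp [hF]
    | succ n ih =>
      have hstep : F (n + 1) = F n + (γ n + d n) * a n + c (n + 1) := by
        simp only [hF, hE, Finset.sum_range_succ]; ring
      have h1 : (γ n + d n) * a n ≤ (γ n + d n) * (σ n * F n) :=
        mul_le_mul_of_nonneg_left (haF n) (by linarith [hγ0 n, hd n])
      have h2 : F n + (γ n + d n) * (σ n * F n) = (1 + σ n * γ n) * (1 + d n) * F n := by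
        linear_combination (F n * d n) * (hσ1 n)
      have h3 : (1 + σ n * γ n) * (1 + d n) ≤ Real.exp (σ n * γ n + d n) := by
        rw [Real.exp_add]
        have e1 : 1 + σ n * γ n ≤ Real.exp (σ n * γ n) := by
          linarith [Real.add_one_le_exp (σ n * γ n)]
        have e2 : 1 + d n ≤ Real.exp (d n) := by
          linarith [Real.add_one_le_exp (d n)]
        exact mul_le_mul e1 e2 (by linarith [hd n]) (Real.exp_nonneg _)
      have h4 : F (n + 1) ≤ Real.exp (σ n * γ n + d n) * F n + c (n + 1) := by
        rw [hstep]
        calc F n + (γ n + d n) * a n + c (n + 1)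
            ≤ (1 + σ n * γ n) * (1 + d n) * F n + c (n + 1) := by
              rw [← h2]; linarith
          _ ≤ Real.exp (σ n * γ n + d n) * F n + c (n + 1) := by
              have := mul_le_mul_of_nonneg_right h3 (hFnn n)
              linarith
      have h5 : Real.exp (σ n * γ n + d n) * F n
          ≤ Real.exp (σ n * γ n + d n) * (Real.exp (∑ j ∈ range n, (σ j * γ j + d j)) * E n) :=
        mul_le_mul_of_nonneg_left ih (Real.exp_nonneg _)
      have hEstep : E (n + 1) = E n + c (n + 1) := by
        simp only [hE, Finset.sum_range_succ]; ring
      have hexp1 : (1:ℝ) ≤ Real.exp (∑ j ∈ range (n + 1), (σ j * γ j + d j)) :=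
        Real.one_le_exp (Finset.sum_nonneg fun j _ =>
          by nlinarith [hσpos j, hγ0 j, hd j, (hσpos j).le.trans (le_refl (σ j))])
      calc F (n + 1) ≤ Real.exp (σ n * γ n + d n)
            * (Real.exp (∑ j ∈ range n, (σ j * γ j + d j)) * E n) + c (n + 1) := by
            linarith
        _ = Real.exp (∑ j ∈ range (n + 1), (σ j * γ j + d j)) * E n + c (n + 1) := by
            rw [← mul_assoc, ← Real.exp_add]
            congr 2
            rw [Finset.sum_range_succ]; ring
        _ ≤ Real.exp (∑ j ∈ range (n + 1), (σ j * γ j + d j)) * E (n + 1) := by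
            rw [hEstep]
            nlinarith [hc (n + 1), hexp1]
  intro n
  have h1 := hyp n
  have h2 : a n + ∑ j ∈ range (n + 1), b j ≤ γ n * a n + F n := by
    simp only [hF, hE]; linarith
  have h3 : γ n * a n ≤ γ n * (σ n * F n) :=
    mul_le_mul_of_nonneg_left (haF n) (hγ0 n)
  have h4 : a n + ∑ j ∈ range (n + 1), b j ≤ (1 + σ n * γ n) * F n := by
    nlinarith
  have h5 : (1 + σ n * γ n) * F n ≤ Real.exp (σ n * γ n) * F n :=
    mul_le_mul_of_nonneg_right (by linarith [Real.add_one_le_exp (σ n * γ n)]) (hFnn n)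
  have h6 : Real.exp (σ n * γ n) * F n
      ≤ Real.exp (σ n * γ n) * (Real.exp (∑ j ∈ range n, (σ j * γ j + d j)) * E n) :=
    mul_le_mul_of_nonneg_left (hFexp n) (Real.exp_nonneg _)
  have h7 : Real.exp (σ n * γ n) * (Real.exp (∑ j ∈ range n, (σ j * γ j + d j)) * E n)
      = Real.exp (σ n * γ n + ∑ j ∈ range n, (σ j * γ j + d j)) * E n := by
    rw [Real.exp_add]; ring
  simp only [hE] at h6 h7 ⊢
  linarith
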